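/- Let a > 0 and β > 0, define errfn(z) := (1/(2π)) ∫_{-∞}^z e^{-ξ²} dξ and e_{a,β}(y,t) := errfn((y + a t)/√(4βt)) - errfn((y - a t)/√(4βt)). Then there exist C > 0 and M > 0 such that for all y ≤ 0 and all t ≥ 1, |∂_t ∂_y e_{a,β}(y,t)| ≤ C t^{-1} exp(-(y + a t)²/(M t)). -/

import Mathlib

set_option maxHeartbeats 1000000

open MeasureTheory Real Set

/-- The error function `errfn(z) = (1/(2π)) ∫_{-∞}^z e^{-ξ²} dξ`. -/
noncomputable def errfn (z : ℝ) : ℝ := (1 / (2 * Real.pi)) * ∫ ξ in Iic z, Real.exp (-ξ^2)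

noncomputable def eKernel (a β y t : ℝ) : ℝ :=
  errfn ((y + a * t) / Real.sqrt (4 * β * t)) - errfn ((y - a * t) / Real.sqrt (4 * β * t))

lemma gauss_int : Integrable (fun ξ : ℝ => Real.exp (-ξ^2)) := by
  simpa using integrable_exp_neg_mul_sq (one_pos)

lemma hasDerivAt_errfn (z : ℝ) :
    HasDerivAt errfn ((1 / (2 * Real.pi)) * Real.exp (-z^2)) z := by
  have h : ∀ w : ℝ, errfn w = (1 / (2 * Real.pi)) *
      ((∫ ξ in Iic (0:ℝ), Real.exp (-ξ^2)) + ∫ ξ in (0:ℝ)..w, Real.exp (-ξ^2)) := by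
    intro w
    unfold errfn
    rw [← intervalIntegral.integral_Iic_sub_Iic gauss_int.integrableOn gauss_int.integrableOn]
    ring
  have hd : HasDerivAt (fun w => ∫ ξ in (0:ℝ)..w, Real.exp (-ξ^2)) (Real.exp (-z^2)) z :=
    intervalIntegral.integral_hasDerivAt_right gauss_int.intervalIntegrable
      gauss_int.aestronglyMeasurable.stronglyMeasurableAtFilter (by fun_prop)
  have h2 := ((hd.const_add (∫ ξ in Iic (0:ℝ), Real.exp (-ξ^2))).const_mul (1 / (2 * Real.pi)))
  have heq : errfn = fun w => (1 / (2 * Real.pi)) *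
      ((∫ ξ in Iic (0:ℝ), Real.exp (-ξ^2)) + ∫ ξ in (0:ℝ)..w, Real.exp (-ξ^2)) :=
    funext h
  rw [heq]
  exact h2

lemma deriv_y_eKernel (a β y : ℝ) (hβ : 0 < β) {t : ℝ} (ht : 0 < t) :
    deriv (fun y' => eKernel a β y' t) y = (1/(2*Real.pi)) * ((Real.sqrt (4*β*t))⁻¹ *
        (Real.exp (-((y+a*t)^2/(4*β*t))) - Real.exp (-((y-a*t)^2/(4*β*t))))) := by
  have hr : (0:ℝ) < 4*β*t := by positivity
  have hs : (0:ℝ) < Real.sqrt (4*β*t) := Real.sqrt_pos.2 hr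
  have hs2 : (Real.sqrt (4*β*t))^2 = 4*β*t := Real.sq_sqrt hr.le
  have h1 : HasDerivAt (fun y' : ℝ => (y' + a*t) / Real.sqrt (4*β*t))
      (1 / Real.sqrt (4*β*t)) y := ((hasDerivAt_id y).add_const (a*t)).div_const _
  have h2 : HasDerivAt (fun y' : ℝ => (y' - a*t) / Real.sqrt (4*β*t))
      (1 / Real.sqrt (4*β*t)) y := ((hasDerivAt_id y).sub_const (a*t)).div_const _
  have hp := (hasDerivAt_errfn ((y + a*t) / Real.sqrt (4*β*t))).comp y h1
  have hm := (hasDerivAt_errfn ((y - a*t) / Real.sqrt (4*β*t))).comp y h2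
  have H := hp.sub hm
  have : deriv (fun y' => eKernel a β y' t) y =
      (1 / (2 * Real.pi)) * Real.exp (-((y + a*t) / Real.sqrt (4*β*t))^2) * (1 / Real.sqrt (4*β*t))
      - (1 / (2 * Real.pi)) * Real.exp (-((y - a*t) / Real.sqrt (4*β*t))^2) * (1 / Real.sqrt (4*β*t)) := by
    apply HasDerivAt.deriv
    exact H.congr_of_eventuallyEq (by filter_upwards with y'; simp [eKernel, Function.comp])
  rw [this, div_pow, div_pow, hs2]
  ring

lemma hasDerivAt_G (a β y : ℝ) (hβ : 0 < β) {t : ℝ} (ht : 0 < t) :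
    HasDerivAt (fun t' => (1/(2*Real.pi)) * ((Real.sqrt (4*β*t'))⁻¹ *
        (Real.exp (-((y+a*t')^2/(4*β*t'))) - Real.exp (-((y-a*t')^2/(4*β*t'))))))
      ((1/(2*Real.pi)) * ((-(2*β) / (Real.sqrt (4*β*t) * (4*β*t))) *
          (Real.exp (-((y+a*t)^2/(4*β*t))) - Real.exp (-((y-a*t)^2/(4*β*t))))
        + (Real.sqrt (4*β*t))⁻¹ *
          (Real.exp (-((y+a*t)^2/(4*β*t))) *
              ((4*β*(y+a*t)^2 - 2*a*(y+a*t)*(4*β*t))/(4*β*t)^2)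
           - Real.exp (-((y-a*t)^2/(4*β*t))) *
              ((4*β*(y-a*t)^2 + 2*a*(y-a*t)*(4*β*t))/(4*β*t)^2)))) t := by
  have hr : (0:ℝ) < 4*β*t := by positivity
  have hs : (0:ℝ) < Real.sqrt (4*β*t) := Real.sqrt_pos.2 hr
  have hs2 : (Real.sqrt (4*β*t))^2 = 4*β*t := Real.sq_sqrt hr.le
  have hlin : HasDerivAt (fun t' : ℝ => 4*β*t') (4*β) t := by
    simpa using (hasDerivAt_id t).const_mul (4*β)
  have hsq : HasDerivAt (fun t' : ℝ => Real.sqrt (4*β*t'))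
      (1/(2*Real.sqrt (4*β*t)) * (4*β)) t :=
    (Real.hasDerivAt_sqrt hr.ne').comp t hlin
  have hA : HasDerivAt (fun t' : ℝ => (Real.sqrt (4*β*t'))⁻¹)
      (-(1/(2*Real.sqrt (4*β*t)) * (4*β)) / (Real.sqrt (4*β*t))^2) t := hsq.inv hs.ne'
  have hxp : HasDerivAt (fun t' : ℝ => y + a*t') a t := by
    simpa using ((hasDerivAt_id t).const_mul a).const_add y
  have hxm : HasDerivAt (fun t' : ℝ => y - a*t') (-a) t := by
    simpa using ((hasDerivAt_id t).const_mul a).const_sub y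
  have hφp : HasDerivAt (fun t' : ℝ => (y+a*t')^2/(4*β*t'))
      ((2*(y+a*t)^1*a*(4*β*t) - (y+a*t)^2*(4*β))/(4*β*t)^2) t :=
    (hxp.pow 2).div hlin hr.ne'
  have hφm : HasDerivAt (fun t' : ℝ => (y-a*t')^2/(4*β*t'))
      ((2*(y-a*t)^1*(-a)*(4*β*t) - (y-a*t)^2*(4*β))/(4*β*t)^2) t :=
    (hxm.pow 2).div hlin hr.ne'
  have hBp := hφp.neg.exp
  have hBm := hφm.neg.exp
  have H := ((hA.mul (hBp.sub hBm)).const_mul (1/(2*Real.pi)))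
  refine H.congr_deriv ?_
  simp only [Pi.sub_apply, Pi.neg_apply]
  rw [hs2]
  ring

lemma sq_mul_exp_neg_div_le {ρ : ℝ} (hρ : 0 < ρ) (w : ℝ) :
    w^2 * Real.exp (-(w^2/ρ)) ≤ ρ := by
  have h1 : w^2/ρ ≤ Real.exp (w^2/ρ) := by
    have := Real.add_one_le_exp (w^2/ρ); linarith
  have h2 : w^2 ≤ ρ * Real.exp (w^2/ρ) := by
    rw [div_le_iff₀ hρ] at h1
    calc w^2 ≤ Real.exp (w^2/ρ) * ρ := h1
      _ = ρ * Real.exp (w^2/ρ) := mul_comm _ _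
  calc w^2 * Real.exp (-(w^2/ρ))
      ≤ (ρ * Real.exp (w^2/ρ)) * Real.exp (-(w^2/ρ)) :=
        mul_le_mul_of_nonneg_right h2 (Real.exp_pos _).le
    _ = ρ := by rw [mul_assoc, ← Real.exp_add]; simp

lemma abs_mul_exp_le {r : ℝ} (hr : 0 < r) (w : ℝ) :
    |w| * Real.exp (-(w^2/(2*r))) ≤ Real.sqrt r := by
  have h0 : 0 ≤ |w| * Real.exp (-(w^2/(2*r))) := by positivity
  rw [← Real.sqrt_sq h0]
  apply Real.sqrt_le_sqrt
  have hE : Real.exp (-(w^2/(2*r))) ^ 2 = Real.exp (-(w^2/r)) := by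
    rw [sq, ← Real.exp_add]
    congr 1
    field_simp
    ring
  rw [mul_pow, sq_abs, hE]
  exact sq_mul_exp_neg_div_le hr w

lemma sq_mul_exp_half_le {r : ℝ} (hr : 0 < r) (w : ℝ) :
    w^2 * Real.exp (-(w^2/(2*r))) ≤ 2*r := by
  have := sq_mul_exp_neg_div_le (by positivity : (0:ℝ) < 2*r) w
  convert this using 3

lemma core_bound (a β t x z : ℝ) (ha : 0 < a) (hβ : 0 < β) (ht : 1 ≤ t)
    (hxz : x^2 ≤ z^2) :
    |(1/(2*Real.pi)) * ((-(2*β) / (Real.sqrt (4*β*t) * (4*β*t))) *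
          (Real.exp (-(x^2/(4*β*t))) - Real.exp (-(z^2/(4*β*t))))
        + (Real.sqrt (4*β*t))⁻¹ *
          (Real.exp (-(x^2/(4*β*t))) * ((4*β*x^2 - 2*a*x*(4*β*t))/(4*β*t)^2)
           - Real.exp (-(z^2/(4*β*t))) * ((4*β*z^2 + 2*a*z*(4*β*t))/(4*β*t)^2)))|
    ≤ ((1/(2*Real.pi)) * (5/Real.sqrt (4*β) + a/β) + 1) * t⁻¹ *
        Real.exp (-(x^2/(2*(4*β*t)))) := by
  have ht0 : (0:ℝ) < t := lt_of_lt_of_le one_pos ht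
  have hr : (0:ℝ) < 4*β*t := by positivity
  set r : ℝ := 4*β*t with hrdef
  set s : ℝ := Real.sqrt r with hsdef
  have hs : 0 < s := Real.sqrt_pos.2 hr
  set s0 : ℝ := Real.sqrt (4*β) with hs0def
  have hs0 : 0 < s0 := Real.sqrt_pos.2 (by positivity)
  have hs0s : s0 ≤ s := Real.sqrt_le_sqrt (by nlinarith)
  have hsne := hs.ne'
  have hrne := hr.ne'
  have hs0ne := hs0.ne'
  set Bp : ℝ := Real.exp (-(x^2/r)) with hBpdef
  set Bm : ℝ := Real.exp (-(z^2/r)) with hBmdef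
  set E : ℝ := Real.exp (-(x^2/(2*r))) with hEdef
  set Fm : ℝ := Real.exp (-(z^2/(2*r))) with hFmdef
  have hBp0 : 0 < Bp := Real.exp_pos _
  have hBm0 : 0 < Bm := Real.exp_pos _
  have hE0 : 0 < E := Real.exp_pos _
  have hFm0 : 0 < Fm := Real.exp_pos _
  have hE1 : E ≤ 1 := Real.exp_le_one_iff.mpr (neg_nonpos.2 (by positivity))
  have hFm1 : Fm ≤ 1 := Real.exp_le_one_iff.mpr (neg_nonpos.2 (by positivity))
  have hBpE : Bp = E * E := by
    rw [hBpdef, hEdef, ← Real.exp_add]; congr 1; field_simp; ring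
  have hBmF : Bm = Fm * Fm := by
    rw [hBmdef, hFmdef, ← Real.exp_add]; congr 1; field_simp; ring
  have hFmE : Fm ≤ E := by
    rw [hFmdef, hEdef]
    apply Real.exp_le_exp.2
    have h : x^2/(2*r) ≤ z^2/(2*r) := by gcongr
    linarith
  have hBpE' : Bp ≤ E := by nlinarith [hBpE]
  have hBmE : Bm ≤ E := by nlinarith [hBmF]
  -- key pointwise bounds
  have kxa : |x| * E ≤ s := abs_mul_exp_le hr x
  have kx2 : x^2 * E ≤ 2*r := sq_mul_exp_half_le hr x
  have kza : |z| * Fm ≤ s := abs_mul_exp_le hr z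
  have kz2 : z^2 * Fm ≤ 2*r := sq_mul_exp_half_le hr z
  have e1 : x^2 * Bp ≤ (2*r) * E := by
    calc x^2 * Bp = (x^2*E)*E := by rw [hBpE]; ring
      _ ≤ (2*r)*E := mul_le_mul_of_nonneg_right kx2 hE0.le
  have e2 : |x| * Bp ≤ s * E := by
    calc |x| * Bp = (|x| * E)*E := by rw [hBpE]; ring
      _ ≤ s*E := mul_le_mul_of_nonneg_right kxa hE0.le
  have e3 : z^2 * Bm ≤ (2*r) * E := by
    calc z^2 * Bm = (z^2*Fm)*Fm := by rw [hBmF]; ring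
      _ ≤ (2*r)*E := mul_le_mul kz2 hFmE hFm0.le (by positivity)
  have e4 : |z| * Bm ≤ s * E := by
    calc |z| * Bm = (|z| * Fm)*Fm := by rw [hBmF]; ring
      _ ≤ s*E := mul_le_mul kza hFmE hFm0.le hs.le
  -- P bound
  have hdiv : 4*β/(s*r) ≤ (1/s0)*t⁻¹ := by
    have h4 : 4*β/(s*r) ≤ 4*β/(s0*r) := by
      gcongr
    have h5 : 4*β/(s0*r) = (1/s0)*t⁻¹ := by rw [hrdef]; field_simp
    linarith
  have hP : |(-(2*β) / (s*r)) * (Bp - Bm)| ≤ (1/s0) * t⁻¹ * E := by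
    rw [abs_mul]
    have h1 : |(-(2*β) / (s*r))| = 2*β/(s*r) := by
      rw [abs_div, abs_neg, abs_of_nonneg (by positivity : (0:ℝ) ≤ 2*β),
        abs_of_nonneg (by positivity : (0:ℝ) ≤ s*r)]
    have h2 : |Bp - Bm| ≤ 2*E := by
      rw [abs_le]; constructor <;> linarith
    rw [h1]
    calc 2*β/(s*r) * |Bp - Bm| ≤ (2*β/(s*r)) * (2*E) :=
          mul_le_mul_of_nonneg_left h2 (by positivity)
      _ = (4*β/(s*r)) * E := by ring
      _ ≤ ((1/s0)*t⁻¹) * E := mul_le_mul_of_nonneg_right hdiv hE0.le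
      _ = (1/s0) * t⁻¹ * E := by ring
  -- Q bound
  have habs_sub : ∀ A B : ℝ, |A - B| ≤ |A| + |B| := by
    intro A B
    calc |A - B| = |A + -B| := by ring_nf
      _ ≤ |A| + |-B| := abs_add_le _ _
      _ = |A| + |B| := by rw [abs_neg]
  have hNp : |4*β*x^2 - 2*a*x*r| ≤ 4*β*x^2 + 2*a*|x| * r := by
    calc |4*β*x^2 - 2*a*x*r| ≤ |4*β*x^2| + |2*a*x*r| := habs_sub _ _
      _ = 4*β*x^2 + 2*a*|x| * r := by
          rw [abs_of_nonneg (by positivity : (0:ℝ) ≤ 4*β*x^2), abs_mul, abs_mul,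
            abs_of_nonneg (by positivity : (0:ℝ) ≤ 2*a), abs_of_nonneg hr.le]
  have hNm : |4*β*z^2 + 2*a*z*r| ≤ 4*β*z^2 + 2*a*|z| * r := by
    calc |4*β*z^2 + 2*a*z*r| ≤ |4*β*z^2| + |2*a*z*r| := abs_add_le _ _
      _ = 4*β*z^2 + 2*a*|z| * r := by
          rw [abs_of_nonneg (by positivity : (0:ℝ) ≤ 4*β*z^2), abs_mul, abs_mul,
            abs_of_nonneg (by positivity : (0:ℝ) ≤ 2*a), abs_of_nonneg hr.le]
  have hQ : |s⁻¹ * (Bp * ((4*β*x^2 - 2*a*x*r)/r^2) - Bm * ((4*β*z^2 + 2*a*z*r)/r^2))|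
      ≤ (4/s0 + a/β) * t⁻¹ * E := by
    have hinner : |Bp * ((4*β*x^2 - 2*a*x*r)/r^2) - Bm * ((4*β*z^2 + 2*a*z*r)/r^2)|
        ≤ Bp * ((4*β*x^2 + 2*a*|x| * r)/r^2) + Bm * ((4*β*z^2 + 2*a*|z| * r)/r^2) := by
      calc |Bp * ((4*β*x^2 - 2*a*x*r)/r^2) - Bm * ((4*β*z^2 + 2*a*z*r)/r^2)|
          ≤ |Bp * ((4*β*x^2 - 2*a*x*r)/r^2)| + |Bm * ((4*β*z^2 + 2*a*z*r)/r^2)| :=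
            habs_sub _ _
        _ ≤ Bp * ((4*β*x^2 + 2*a*|x| * r)/r^2) + Bm * ((4*β*z^2 + 2*a*|z| * r)/r^2) := by
            rw [abs_mul, abs_mul, abs_div, abs_div,
              abs_of_pos hBp0, abs_of_pos hBm0,
              abs_of_nonneg (by positivity : (0:ℝ) ≤ r^2)]
            gcongr
    have hmid : s⁻¹ * (Bp * ((4*β*x^2 + 2*a*|x| * r)/r^2) + Bm * ((4*β*z^2 + 2*a*|z| * r)/r^2))
        ≤ (4/s0 + a/β) * t⁻¹ * E := by
      have step1 : s⁻¹ * (Bp * ((4*β*x^2 + 2*a*|x| * r)/r^2) + Bm * ((4*β*z^2 + 2*a*|z| * r)/r^2))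
          = (1/(s*r^2)) * ((4*β)*(x^2*Bp) + (2*a*r)*(|x| * Bp)
            + ((4*β)*(z^2*Bm) + (2*a*r)*(|z| * Bm))) := by
        field_simp
      have step2 : (1/(s*r^2)) * ((4*β)*(x^2*Bp) + (2*a*r)*(|x| * Bp)
            + ((4*β)*(z^2*Bm) + (2*a*r)*(|z| * Bm)))
          ≤ (1/(s*r^2)) * ((4*β)*((2*r)*E) + (2*a*r)*(s*E)
            + ((4*β)*((2*r)*E) + (2*a*r)*(s*E))) := by
        gcongr
      have step3 : (1/(s*r^2)) * ((4*β)*((2*r)*E) + (2*a*r)*(s*E)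
            + ((4*β)*((2*r)*E) + (2*a*r)*(s*E)))
          = (16*β/(s*r)) * E + (4*a/r) * E := by
        field_simp
        ring
      have d1 : 16*β/(s*r) ≤ (4/s0)*t⁻¹ := by
        have : 16*β/(s*r) = 4*(4*β/(s*r)) := by ring
        rw [this]
        have : (4:ℝ)/s0*t⁻¹ = 4*((1/s0)*t⁻¹) := by ring
        rw [this]
        exact mul_le_mul_of_nonneg_left hdiv (by norm_num)
      have d2 : 4*a/r = (a/β)*t⁻¹ := by rw [hrdef]; field_simp
      calc s⁻¹ * (Bp * ((4*β*x^2 + 2*a*|x| * r)/r^2) + Bm * ((4*β*z^2 + 2*a*|z| * r)/r^2))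
          = (1/(s*r^2)) * ((4*β)*(x^2*Bp) + (2*a*r)*(|x| * Bp)
            + ((4*β)*(z^2*Bm) + (2*a*r)*(|z| * Bm))) := step1
        _ ≤ (16*β/(s*r)) * E + (4*a/r) * E := by rw [← step3]; exact step2
        _ ≤ ((4/s0)*t⁻¹) * E + ((a/β)*t⁻¹) * E := by
            rw [d2]
            exact add_le_add (mul_le_mul_of_nonneg_right d1 hE0.le) le_rfl
        _ = (4/s0 + a/β) * t⁻¹ * E := by ring
    calc |s⁻¹ * (Bp * ((4*β*x^2 - 2*a*x*r)/r^2) - Bm * ((4*β*z^2 + 2*a*z*r)/r^2))|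
        = s⁻¹ * |Bp * ((4*β*x^2 - 2*a*x*r)/r^2) - Bm * ((4*β*z^2 + 2*a*z*r)/r^2)| := by
          rw [abs_mul, abs_of_nonneg (by positivity : (0:ℝ) ≤ s⁻¹)]
      _ ≤ s⁻¹ * (Bp * ((4*β*x^2 + 2*a*|x| * r)/r^2) + Bm * ((4*β*z^2 + 2*a*|z| * r)/r^2)) :=
          mul_le_mul_of_nonneg_left hinner (by positivity)
      _ ≤ (4/s0 + a/β) * t⁻¹ * E := hmid
  -- assemble
  have hc : (0:ℝ) < 1/(2*Real.pi) := by positivity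
  calc |(1/(2*Real.pi)) * ((-(2*β) / (s*r)) * (Bp - Bm)
        + s⁻¹ * (Bp * ((4*β*x^2 - 2*a*x*r)/r^2) - Bm * ((4*β*z^2 + 2*a*z*r)/r^2)))|
      = (1/(2*Real.pi)) * |(-(2*β) / (s*r)) * (Bp - Bm)
        + s⁻¹ * (Bp * ((4*β*x^2 - 2*a*x*r)/r^2) - Bm * ((4*β*z^2 + 2*a*z*r)/r^2))| := by
        rw [abs_mul, abs_of_pos hc]
    _ ≤ (1/(2*Real.pi)) * (|(-(2*β) / (s*r)) * (Bp - Bm)|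
        + |s⁻¹ * (Bp * ((4*β*x^2 - 2*a*x*r)/r^2) - Bm * ((4*β*z^2 + 2*a*z*r)/r^2))|) :=
        mul_le_mul_of_nonneg_left (abs_add_le _ _) hc.le
    _ ≤ (1/(2*Real.pi)) * ((1/s0) * t⁻¹ * E + (4/s0 + a/β) * t⁻¹ * E) :=
        mul_le_mul_of_nonneg_left (add_le_add hP hQ) hc.le
    _ = ((1/(2*Real.pi)) * (5/s0 + a/β)) * t⁻¹ * E := by ring
    _ ≤ ((1/(2*Real.pi)) * (5/s0 + a/β) + 1) * t⁻¹ * E := by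
        have h0 : (0:ℝ) ≤ t⁻¹ * E := by positivity
        nlinarith

/-- Bound on the mixed derivative `∂_t ∂_y e_{a,β}(y,t)` for `y ≤ 0`, `t ≥ 1`. -/
theorem eKernel_deriv_yt_bound (a β : ℝ) (ha : 0 < a) (hβ : 0 < β) :
    ∃ C M : ℝ, 0 < C ∧ 0 < M ∧ ∀ y : ℝ, y ≤ 0 → ∀ t : ℝ, 1 ≤ t →
      |deriv (fun t' => deriv (fun y' => eKernel a β y' t') y) t|
        ≤ C * t ^ (-(1:ℝ)) * Real.exp (-(y + a * t)^2 / (M * t)) := by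
  refine ⟨(1/(2*Real.pi)) * (5/Real.sqrt (4*β) + a/β) + 1, 8*β, by positivity,
    by positivity, ?_⟩
  intro y hy t ht
  have ht0 : (0:ℝ) < t := lt_of_lt_of_le one_pos ht
  have hev : (fun t' => deriv (fun y' => eKernel a β y' t') y) =ᶠ[nhds t]
      (fun t' => (1/(2*Real.pi)) * ((Real.sqrt (4*β*t'))⁻¹ *
        (Real.exp (-((y+a*t')^2/(4*β*t'))) - Real.exp (-((y-a*t')^2/(4*β*t')))))) := by
    filter_upwards [eventually_gt_nhds ht0] with t' ht'
    exact deriv_y_eKernel a β y hβ ht'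
  rw [hev.deriv_eq, (hasDerivAt_G a β y hβ ht0).deriv]
  have hxz : (y+a*t)^2 ≤ (y-a*t)^2 := by
    nlinarith [mul_nonneg (mul_nonneg ha.le ht0.le) (neg_nonneg.2 hy)]
  have hb := core_bound a β t (y+a*t) (y-a*t) ha hβ ht hxz
  have h1 : t ^ (-(1:ℝ)) = t⁻¹ := by rw [Real.rpow_neg ht0.le, Real.rpow_one]
  have h2 : -(y + a*t)^2 / (8*β*t) = -((y+a*t)^2/(2*(4*β*t))) := by ring
  rw [h1, h2]
  exact hb
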